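/- Main theorem: Let X^n be uniform on {0,1}^n and Y^n = X^n ⊕ Z^n with Z^n i.i.d. Bernoulli(α), α ∈ [0,1/2], independent of X^n. Then for every function f : {0,1}^n → {0,1}^{n−1}, I(f(X^n); Y^n) ≤ (n−1)·(1 − h(α)), with equality for f(x^n) = (x_1,...,x_{n−1}). -/

import Mathlib

/-- Binary entropy function (in bits). -/
noncomputable def binEnt (a : ℝ) : ℝ :=
  -(a * Real.logb 2 a) - ((1 - a) * Real.logb 2 (1 - a))

/-- BSC(α) transition kernel over `{0,1}^n`. -/
noncomputable def bscK {n : ℕ} (α : ℝ) (x y : Fin n → Bool) : ℝ :=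
  ∏ i, (if y i = x i then 1 - α else α)

/-- Joint pmf of `(f(X^n), Y^n)` with `X^n` uniform on `{0,1}^n` and
`Y^n = X^n ⊕ Z^n`, `Z^n` i.i.d. Bernoulli(α). -/
noncomputable def jointPMF {n : ℕ} (f : (Fin n → Bool) → (Fin (n-1) → Bool))
    (α : ℝ) (j : Fin (n-1) → Bool) (y : Fin n → Bool) : ℝ :=
  ((2 : ℝ) ^ n)⁻¹ * ∑ x ∈ Finset.univ.filter (fun x => f x = j), bscK α x y

/-- Marginal of `f(X^n)`. -/
noncomputable def margJ {n : ℕ} (f : (Fin n → Bool) → (Fin (n-1) → Bool))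
    (α : ℝ) (j : Fin (n-1) → Bool) : ℝ :=
  ∑ y, jointPMF f α j y

/-- Marginal of `Y^n`. -/
noncomputable def margY {n : ℕ} (f : (Fin n → Bool) → (Fin (n-1) → Bool))
    (α : ℝ) (y : Fin n → Bool) : ℝ :=
  ∑ j, jointPMF f α j y

/-- Mutual information `I(f(X^n); Y^n)` in bits. -/
noncomputable def mutInfo {n : ℕ} (f : (Fin n → Bool) → (Fin (n-1) → Bool))
    (α : ℝ) : ℝ :=
  ∑ j, ∑ y, jointPMF f α j y *
    Real.logb 2 (jointPMF f α j y / (margJ f α j * margY f α y))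


noncomputable def Fl (t : ℝ) : ℝ := t * Real.logb 2 t

lemma Fl_zero : Fl 0 = 0 := by simp [Fl]

lemma Fl_mul {s t : ℝ} (hs : 0 ≤ s) (ht : 0 ≤ t) :
    Fl (s * t) = t * Fl s + s * Fl t := by
  rcases eq_or_lt_of_le hs with rfl | hs
  · simp [Fl]
  rcases eq_or_lt_of_le ht with rfl | ht
  · simp [Fl]
  unfold Fl
  rw [Real.logb_mul (ne_of_gt hs) (ne_of_gt ht)]
  ring

lemma binEnt_eq (a : ℝ) : binEnt a = Real.binEntropy a / Real.log 2 := by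
  unfold binEnt Real.binEntropy Real.logb
  rw [Real.log_inv, Real.log_inv]
  ring

lemma binEnt_le_one {a : ℝ} : binEnt a ≤ 1 := by
  rw [binEnt_eq]
  have h2 : (0:ℝ) < Real.log 2 := Real.log_pos (by norm_num)
  rw [div_le_one h2]
  exact Real.binEntropy_le_log_two

lemma binEnt_fl (t : ℝ) : binEnt t = -(Fl t) - Fl (1 - t) := by
  unfold binEnt Fl; ring

lemma chord {a p : ℝ} (ha0 : 0 ≤ a) (ha1 : a ≤ 1/2) (hp0 : 0 ≤ p) (hp1 : p ≤ 1/2) :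
    binEnt a + 2*p*(1 - binEnt a) ≤ binEnt (a + (1 - 2*a)*p) := by
  have h2 : (0:ℝ) < Real.log 2 := Real.log_pos (by norm_num)
  have hcc := Real.strictConcave_binEntropy.concaveOn
  have key := hcc.2 (⟨ha0, by linarith⟩ : a ∈ Set.Icc (0:ℝ) 1)
      (⟨by norm_num, by norm_num⟩ : (2:ℝ)⁻¹ ∈ Set.Icc (0:ℝ) 1)
      (by linarith : (0:ℝ) ≤ 1 - 2*p) (by linarith : (0:ℝ) ≤ 2*p) (by ring)
  rw [Real.binEntropy_two_inv] at key
  have harg : (1 - 2*p) • a + (2*p) • (2:ℝ)⁻¹ = a + (1 - 2*a)*p := by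
    simp only [smul_eq_mul]; ring
  rw [harg] at key
  simp only [smul_eq_mul] at key
  have hexp : binEnt (a + (1 - 2*a)*p) - (binEnt a + 2*p*(1 - binEnt a)) =
      (Real.binEntropy (a + (1 - 2*a)*p) -
        ((1 - 2*p) * Real.binEntropy a + 2*p*Real.log 2)) / Real.log 2 := by
    rw [binEnt_eq, binEnt_eq]
    field_simp
    ring
  have : 0 ≤ binEnt (a + (1 - 2*a)*p) - (binEnt a + 2*p*(1 - binEnt a)) := by
    rw [hexp]
    apply div_nonneg _ h2.le
    linarith
  linarith

lemma key_aux {α u v : ℝ} (hα0 : 0 ≤ α) (hα2 : α ≤ 1/2) (hu : 0 ≤ u) (hv : 0 ≤ v)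
    (huv : u ≤ v) :
    Fl ((1-α)*u + α*v) + Fl (α*u + (1-α)*v) ≤
      Fl (u+v) - binEnt α * (u+v) - 2*(1 - binEnt α) * u := by
  rcases eq_or_lt_of_le (by linarith : (0:ℝ) ≤ u + v) with hs | hs
  · have hu0 : u = 0 := by linarith
    have hv0 : v = 0 := by linarith
    simp [hu0, hv0, Fl]
  have hsne : u + v ≠ 0 := ne_of_gt hs
  set s := u + v with hsdef
  set p := u / s with hpdef
  have hp0 : 0 ≤ p := div_nonneg hu hs.le
  have hp2 : p ≤ 1/2 := by
    rw [hpdef, div_le_iff₀ hs]; linarith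
  set t := α + (1 - 2*α)*p with htdef
  have ht0 : 0 ≤ t := by nlinarith
  have ht2 : t ≤ 1/2 := by nlinarith
  have hsp : s * p = u := by
    rw [hpdef]; field_simp
  have hc : (1-α)*u + α*v = s * t := by
    rw [htdef]
    have : s * (α + (1 - 2*α) * p) = s * α + (1-2*α) * (s * p) := by ring
    rw [this, hsp, hsdef]; ring
  have hd : α*u + (1-α)*v = s * (1 - t) := by
    have : s * (1 - t) = s - s * t := by ring
    rw [this, ← hc, hsdef]; ring
  have hFl : Fl (s*t) + Fl (s*(1-t)) = Fl s - s * binEnt t := by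
    rw [Fl_mul hs.le ht0, Fl_mul hs.le (by linarith : (0:ℝ) ≤ 1 - t), binEnt_fl]
    ring
  rw [hc, hd, hFl]
  have hch := chord hα0 hα2 hp0 hp2
  have := mul_le_mul_of_nonneg_left hch hs.le
  have h2u : s*(2*p*(1 - binEnt α)) = 2*(1 - binEnt α)*u := by
    rw [← hsp]; ring
  have h3 : s * (binEnt α + 2*p*(1 - binEnt α)) = s * binEnt α + 2*(1 - binEnt α)*u := by
    rw [← h2u]; ring
  rw [h3] at this
  have hsuv : s = u + v := hsdef
  linarith

lemma key_pointwise {α u v : ℝ} (hα0 : 0 ≤ α) (hα2 : α ≤ 1/2) (hu : 0 ≤ u) (hv : 0 ≤ v) :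
    Fl ((1-α)*u + α*v) + Fl (α*u + (1-α)*v) ≤
      Fl (u+v) - binEnt α * (u+v) - 2*(1 - binEnt α) * min u v := by
  rcases le_total u v with h | h
  · rw [min_eq_left h]; exact key_aux hα0 hα2 hu hv h
  · rw [min_eq_right h]
    have := key_aux hα0 hα2 hv hu h
    rw [show (1-α)*u + α*v = α*v + (1-α)*u from by ring,
       show α*u + (1-α)*v = (1-α)*v + α*u from by ring,
       show u+v = v+u from by ring]
    linarith [this]



-- generic decomposition of a sum over (Fin (n+1) → Bool)
lemma sum_cons {n : ℕ} {M : Type*} [AddCommMonoid M] (g : (Fin (n+1) → Bool) → M) :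
    ∑ y, g y = ∑ y' : Fin n → Bool, (g (Fin.cons false y') + g (Fin.cons true y')) := by
  calc ∑ y, g y
      = ∑ p : Bool × (Fin n → Bool), g (Fin.cons p.1 p.2) :=
        (Fintype.sum_equiv (Fin.consEquiv fun _ => Bool) _ _ fun p => rfl).symm
    _ = ∑ a : Bool, ∑ y' : Fin n → Bool, g (Fin.cons a y') := Fintype.sum_prod_type _
    _ = ∑ y' : Fin n → Bool, (g (Fin.cons false y') + g (Fin.cons true y')) := by
        rw [Fintype.sum_bool, ← Finset.sum_add_distrib]
        exact Finset.sum_congr rfl fun y' _ => add_comm _ _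

lemma sum_snoc {n : ℕ} {M : Type*} [AddCommMonoid M] (g : (Fin (n+1) → Bool) → M) :
    ∑ y, g y = ∑ y' : Fin n → Bool, (g (Fin.snoc y' false) + g (Fin.snoc y' true)) := by
  calc ∑ y, g y
      = ∑ p : Bool × (Fin n → Bool), g (Fin.snoc p.2 p.1) :=
        (Fintype.sum_equiv (Fin.snocEquiv fun _ => Bool) _ _ fun p => rfl).symm
    _ = ∑ a : Bool, ∑ y' : Fin n → Bool, g (Fin.snoc y' a) := Fintype.sum_prod_type _
    _ = ∑ y' : Fin n → Bool, (g (Fin.snoc y' false) + g (Fin.snoc y' true)) := by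
        rw [Fintype.sum_bool, ← Finset.sum_add_distrib]
        exact Finset.sum_congr rfl fun y' _ => add_comm _ _

lemma bscK_cons {n : ℕ} (α : ℝ) (a b : Bool) (x y : Fin n → Bool) :
    bscK α (Fin.cons a x) (Fin.cons b y) = (if b = a then 1 - α else α) * bscK α x y := by
  unfold bscK
  rw [Fin.prod_univ_succ]
  simp only [Fin.cons_zero, Fin.cons_succ]

lemma bscK_snoc {n : ℕ} (α : ℝ) (a b : Bool) (x y : Fin n → Bool) :
    bscK α (Fin.snoc x a) (Fin.snoc y b) = (if b = a then 1 - α else α) * bscK α x y := by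
  unfold bscK
  rw [Fin.prod_univ_castSucc]
  simp only [Fin.snoc_castSucc, Fin.snoc_last]
  exact mul_comm _ _

lemma bscK_nonneg {n : ℕ} {α : ℝ} (h0 : 0 ≤ α) (h1 : α ≤ 1) (x y : Fin n → Bool) :
    0 ≤ bscK α x y :=
  Finset.prod_nonneg fun i _ => by
    by_cases h : y i = x i <;> simp [h] <;> linarith

lemma sum_bscK_right {n : ℕ} (α : ℝ) (x : Fin n → Bool) : ∑ y, bscK α x y = 1 := by
  induction n with
  | zero =>
      have h1 : ∀ y : Fin 0 → Bool, bscK α x y = 1 := fun y => by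
        unfold bscK; simp
      rw [Finset.sum_congr rfl fun y _ => h1 y]
      simp
  | succ n ih =>
      cases x using Fin.consCases with
      | cons a x' =>
        rw [sum_cons (g := fun y => bscK α (Fin.cons a x') y)]
        have : ∀ y' : Fin n → Bool,
            bscK α (Fin.cons a x') (Fin.cons false y') +
            bscK α (Fin.cons a x') (Fin.cons true y') = bscK α x' y' := by
          intro y'
          rw [bscK_cons, bscK_cons]
          cases a <;> simp <;> ring
        rw [Finset.sum_congr rfl fun y' _ => this y']
        exact ih x'

lemma sum_bscK_left {n : ℕ} (α : ℝ) (y : Fin n → Bool) : ∑ x, bscK α x y = 1 := by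
  induction n with
  | zero =>
      have h1 : ∀ x : Fin 0 → Bool, bscK α x y = 1 := fun x => by
        unfold bscK; simp
      rw [Finset.sum_congr rfl fun x _ => h1 x]
      simp
  | succ n ih =>
      cases y using Fin.consCases with
      | cons b y' =>
        rw [sum_cons (g := fun x => bscK α x (Fin.cons b y'))]
        have : ∀ x' : Fin n → Bool,
            bscK α (Fin.cons false x') (Fin.cons b y') +
            bscK α (Fin.cons true x') (Fin.cons b y') = bscK α x' y' := by
          intro x'
          rw [bscK_cons, bscK_cons]
          cases b <;> simp <;> ring
        rw [Finset.sum_congr rfl fun x' _ => this x']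
        exact ih y'

noncomputable def qc {n : ℕ} (α : ℝ) (w : (Fin n → Bool) → ℕ) (y : Fin n → Bool) : ℝ :=
  ∑ x, (w x : ℝ) * bscK α x y

lemma qc_nonneg {n : ℕ} {α : ℝ} (h0 : 0 ≤ α) (h1 : α ≤ 1) (w : (Fin n → Bool) → ℕ)
    (y : Fin n → Bool) : 0 ≤ qc α w y :=
  Finset.sum_nonneg fun x _ => mul_nonneg (Nat.cast_nonneg _) (bscK_nonneg h0 h1 x y)

lemma sum_qc {n : ℕ} (α : ℝ) (w : (Fin n → Bool) → ℕ) :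
    ∑ y, qc α w y = ∑ x, (w x : ℝ) := by
  unfold qc
  rw [Finset.sum_comm]
  exact Finset.sum_congr rfl fun x _ => by
    rw [← Finset.mul_sum, sum_bscK_right, mul_one]

lemma qc_cons {n : ℕ} (α : ℝ) (w : (Fin (n+1) → Bool) → ℕ) (b : Bool) (y' : Fin n → Bool) :
    qc α w (Fin.cons b y') =
      (if b = false then 1-α else α) * qc α (fun x => w (Fin.cons false x)) y'
      + (if b = true then 1-α else α) * qc α (fun x => w (Fin.cons true x)) y' := by
  unfold qc
  rw [sum_cons (g := fun x => (w x : ℝ) * bscK α x (Fin.cons b y'))]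
  rw [Finset.mul_sum, Finset.mul_sum, ← Finset.sum_add_distrib]
  refine Finset.sum_congr rfl fun x' _ => ?_
  rw [bscK_cons, bscK_cons]
  ring

lemma qc_add {n : ℕ} (α : ℝ) (w₀ w₁ : (Fin n → Bool) → ℕ) (y : Fin n → Bool) :
    qc α (fun x => w₀ x + w₁ x) y = qc α w₀ y + qc α w₁ y := by
  unfold qc
  rw [← Finset.sum_add_distrib]
  refine Finset.sum_congr rfl fun x _ => ?_
  push_cast
  ring

lemma qc_min {n : ℕ} {α : ℝ} (h0 : 0 ≤ α) (h1 : α ≤ 1) (w₀ w₁ : (Fin n → Bool) → ℕ)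
    (y : Fin n → Bool) :
    qc α (fun x => min (w₀ x) (w₁ x)) y ≤ min (qc α w₀ y) (qc α w₁ y) := by
  refine le_min ?_ ?_ <;>
    refine Finset.sum_le_sum fun x _ => mul_le_mul_of_nonneg_right ?_ (bscK_nonneg h0 h1 x y)
  · exact_mod_cast Nat.cast_le.mpr (min_le_left _ _)
  · exact_mod_cast Nat.cast_le.mpr (min_le_right _ _)

/-- number of nonzero entries -/
def nsupp {n : ℕ} (w : (Fin n → Bool) → ℕ) : ℕ :=
  (Finset.univ.filter (fun x => w x ≠ 0)).card

lemma nsupp_le {n : ℕ} (w : (Fin (n+1) → Bool) → ℕ) :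
    nsupp w ≤ nsupp (fun x => w (Fin.cons false x) + w (Fin.cons true x))
      + ∑ x, min (w (Fin.cons false x)) (w (Fin.cons true x)) := by
  unfold nsupp
  rw [Finset.card_filter, Finset.card_filter]
  rw [sum_cons (g := fun x => if w x ≠ 0 then 1 else 0)]
  rw [← Finset.sum_add_distrib]
  refine Finset.sum_le_sum fun x _ => ?_
  by_cases h0 : w (Fin.cons false x) = 0 <;> by_cases h1 : w (Fin.cons true x) = 0 <;>
    simp [h0, h1] <;> omega

lemma core {α : ℝ} (hα0 : 0 ≤ α) (hα2 : α ≤ 1/2) :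
    ∀ (n : ℕ) (w : (Fin n → Bool) → ℕ),
    ∑ y, Fl (qc α w y) ≤ Fl (∑ x, (w x : ℝ)) - n * binEnt α * (∑ x, (w x : ℝ))
      - 2*(1 - binEnt α) * ((nsupp w : ℝ) - 1) := by
  have hα1 : α ≤ 1 := by linarith
  have hb1 : binEnt α ≤ 1 := binEnt_le_one
  intro n
  induction n with
  | zero =>
      intro w
      have hW : ∀ y : Fin 0 → Bool, qc α w y = ∑ x, (w x : ℝ) := fun y => by
        unfold qc
        refine Finset.sum_congr rfl fun x _ => ?_
        have : bscK α x y = 1 := by unfold bscK; simp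
        rw [this, mul_one]
      have hcard1 : (Finset.univ : Finset (Fin 0 → Bool)).card = 1 := by
        simp
      rcases Nat.eq_zero_or_pos (w (fun i => i.elim0)) with h0 | h0
      · have hz : ∀ x : Fin 0 → Bool, w x = 0 := fun x => by
          have hx : x = (fun i => i.elim0) := by funext i; exact i.elim0
          rw [hx]; exact h0
        have hs : nsupp w = 0 := by
          unfold nsupp
          rw [Finset.card_eq_zero, Finset.filter_eq_empty_iff]
          exact fun x _ => by simp [hz x]
        have hW0 : (∑ x, (w x : ℝ)) = 0 :=
          Finset.sum_eq_zero fun x _ => by simp [hz x]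
        have hL : ∑ y : Fin 0 → Bool, Fl (qc α w y) = 0 :=
          Finset.sum_eq_zero fun y _ => by rw [hW y, hW0, Fl_zero]
        rw [hs, hW0, hL, Fl_zero]
        simp only [Nat.cast_zero]
        nlinarith
      · have hs : nsupp w = 1 := by
          unfold nsupp
          have he : (Finset.univ.filter (fun x : Fin 0 → Bool => w x ≠ 0)) = Finset.univ := by
            rw [Finset.filter_eq_self]
            intro x _
            have hx : x = (fun i => i.elim0) := by funext i; exact i.elim0
            rw [hx]; omega
          rw [he, hcard1]
        have hL : ∑ y : Fin 0 → Bool, Fl (qc α w y) = Fl (∑ x, (w x:ℝ)) := by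
          rw [Finset.sum_congr rfl fun y _ => by rw [hW y]]
          rw [Finset.sum_const, hcard1, one_smul]
        rw [hL, hs]
        simp
  | succ n ih =>
      intro w
      set w₀ : (Fin n → Bool) → ℕ := fun x => w (Fin.cons false x) with hw₀
      set w₁ : (Fin n → Bool) → ℕ := fun x => w (Fin.cons true x) with hw₁
      set wm : (Fin n → Bool) → ℕ := fun x => w₀ x + w₁ x with hwm
      have hWsplit : (∑ x, (w x : ℝ)) = ∑ x, (wm x : ℝ) := by
        rw [sum_cons (g := fun x => (w x : ℝ))]
        refine Finset.sum_congr rfl fun x _ => by push_cast [hwm]; ring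
      set W : ℝ := ∑ x, (wm x : ℝ) with hWdef
      have hstep1 : ∑ y, Fl (qc α w y) ≤
          ∑ y' : Fin n → Bool, (Fl (qc α wm y') - binEnt α * (qc α wm y')
            - 2*(1 - binEnt α) * min (qc α w₀ y') (qc α w₁ y')) := by
        rw [sum_cons (g := fun y => Fl (qc α w y))]
        refine Finset.sum_le_sum fun y' _ => ?_
        have e0 : qc α w (Fin.cons false y') = (1-α) * qc α w₀ y' + α * qc α w₁ y' := by
          rw [qc_cons]; simp; rfl
        have e1 : qc α w (Fin.cons true y') = α * qc α w₀ y' + (1-α) * qc α w₁ y' := by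
          rw [qc_cons]; simp; rfl
        have em : qc α wm y' = qc α w₀ y' + qc α w₁ y' := qc_add α w₀ w₁ y'
        rw [e0, e1, em]
        exact key_pointwise hα0 hα2 (qc_nonneg hα0 hα1 w₀ y') (qc_nonneg hα0 hα1 w₁ y')
      have hmin : ∑ x, ((min (w₀ x) (w₁ x) : ℕ) : ℝ) ≤
          ∑ y' : Fin n → Bool, min (qc α w₀ y') (qc α w₁ y') := by
        rw [← sum_qc α (fun x => min (w₀ x) (w₁ x))]
        exact Finset.sum_le_sum fun y _ => qc_min hα0 hα1 w₀ w₁ y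
      have hsum2 : ∑ y' : Fin n → Bool, (Fl (qc α wm y') - binEnt α * (qc α wm y')
            - 2*(1 - binEnt α) * min (qc α w₀ y') (qc α w₁ y'))
          = (∑ y', Fl (qc α wm y')) - binEnt α * W
            - 2*(1 - binEnt α) * ∑ y', min (qc α w₀ y') (qc α w₁ y') := by
        rw [Finset.sum_sub_distrib, Finset.sum_sub_distrib, ← Finset.mul_sum, ← Finset.mul_sum]
        rw [sum_qc α wm]
      have hIH := ih wm
      have hnsR : (nsupp w : ℝ) ≤ (nsupp wm : ℝ) + ∑ x, ((min (w₀ x) (w₁ x) : ℕ) : ℝ) := by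
        have h := nsupp_le w
        have h2 : (nsupp w : ℝ) ≤ ((nsupp wm + ∑ x, min (w₀ x) (w₁ x) : ℕ) : ℝ) :=
          Nat.cast_le.mpr h
        push_cast at h2
        convert h2 using 2
        refine Finset.sum_congr rfl fun x _ => ?_
        push_cast
        rfl
      have h1mb : (0:ℝ) ≤ 1 - binEnt α := by linarith
      have hfin : ∑ y, Fl (qc α w y) ≤ Fl W - (n+1) * binEnt α * W
          - 2*(1 - binEnt α) * ((nsupp w : ℝ) - 1) := by
        have hA := hstep1.trans (le_of_eq hsum2)
        have hB1 := mul_le_mul_of_nonneg_left hmin h1mb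
        have hB2 := mul_le_mul_of_nonneg_left hnsR h1mb
        nlinarith
      rw [hWsplit]
      convert hfin using 3
      push_cast
      ring

section Global

variable {n : ℕ} (f : (Fin n → Bool) → (Fin (n-1) → Bool)) (α : ℝ)

noncomputable def qf (j : Fin (n-1) → Bool) (y : Fin n → Bool) : ℝ :=
  ∑ x ∈ Finset.univ.filter (fun x => f x = j), bscK α x y

def mf (j : Fin (n-1) → Bool) : ℕ := (Finset.univ.filter (fun x => f x = j)).card

lemma margY_eq (y : Fin n → Bool) : margY f α y = ((2:ℝ)^n)⁻¹ := by
  unfold margY jointPMF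
  rw [← Finset.mul_sum]
  rw [Finset.sum_fiberwise Finset.univ f (fun x => bscK α x y)]
  rw [sum_bscK_left, mul_one]

lemma sum_qf (j : Fin (n-1) → Bool) : ∑ y, qf f α j y = (mf f j : ℝ) := by
  unfold qf mf
  rw [Finset.sum_comm]
  rw [Finset.sum_congr rfl fun x _ => sum_bscK_right α x]
  simp

lemma margJ_eq (j : Fin (n-1) → Bool) : margJ f α j = ((2:ℝ)^n)⁻¹ * (mf f j : ℝ) := by
  unfold margJ jointPMF
  rw [← Finset.mul_sum]
  congr 1
  exact sum_qf f α j

lemma qf_nonneg (h0 : 0 ≤ α) (h1 : α ≤ 1) (j : Fin (n-1) → Bool) (y : Fin n → Bool) :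
    0 ≤ qf f α j y :=
  Finset.sum_nonneg fun x _ => bscK_nonneg h0 h1 x y

lemma term_eq (h0 : 0 ≤ α) (h1 : α ≤ 1) (j : Fin (n-1) → Bool) (y : Fin n → Bool) :
    jointPMF f α j y * Real.logb 2 (jointPMF f α j y / (margJ f α j * margY f α y)) =
      ((2:ℝ)^n)⁻¹ * (qf f α j y * ((n:ℝ) - Real.logb 2 (mf f j : ℝ)) + Fl (qf f α j y)) := by
  have hj : jointPMF f α j y = ((2:ℝ)^n)⁻¹ * qf f α j y := rfl
  have h2n : (0:ℝ) < 2^n := by positivity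
  rcases eq_or_lt_of_le (qf_nonneg f α h0 h1 j y) with hq | hq
  · rw [hj, ← hq, Fl_zero]
    simp
  · have hm : 0 < mf f j := by
      rcases Nat.eq_zero_or_pos (mf f j) with h | h
      · exfalso
        unfold mf at h
        rw [Finset.card_eq_zero] at h
        unfold qf at hq
        rw [h, Finset.sum_empty] at hq
        exact lt_irrefl _ hq
      · exact h
    have hmR : (0:ℝ) < (mf f j : ℝ) := by exact_mod_cast hm
    have hratio : jointPMF f α j y / (margJ f α j * margY f α y)
        = qf f α j y * 2^n / (mf f j : ℝ) := by
      rw [hj, margJ_eq, margY_eq]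
      field_simp
    rw [hratio, hj]
    rw [Real.logb_div (by positivity) (ne_of_gt hmR),
      Real.logb_mul (ne_of_gt hq) (by positivity), Real.logb_pow,
      Real.logb_self_eq_one (by norm_num)]
    unfold Fl
    ring

lemma mutInfo_eq (h0 : 0 ≤ α) (h1 : α ≤ 1) :
    mutInfo f α = ((2:ℝ)^n)⁻¹ *
      ∑ j, ((mf f j : ℝ) * ((n:ℝ) - Real.logb 2 (mf f j : ℝ)) + ∑ y, Fl (qf f α j y)) := by
  unfold mutInfo
  rw [Finset.mul_sum]
  refine Finset.sum_congr rfl fun j _ => ?_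
  rw [Finset.sum_congr rfl fun y _ => term_eq f α h0 h1 j y]
  rw [← Finset.mul_sum, Finset.sum_add_distrib, ← Finset.sum_mul, sum_qf]

lemma sum_mf : ∑ j, (mf f j : ℕ) = 2^n := by
  unfold mf
  rw [← Finset.card_eq_sum_card_fiberwise (fun x _ => Finset.mem_univ (f x))]
  rw [Finset.card_univ]
  simp [Fintype.card_fun]

end Global

lemma perj_bound {n : ℕ} (f : (Fin n → Bool) → (Fin (n-1) → Bool)) {α : ℝ}
    (hα0 : 0 ≤ α) (hα2 : α ≤ 1/2) (j : Fin (n-1) → Bool) :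
    (mf f j : ℝ) * ((n:ℝ) - Real.logb 2 (mf f j : ℝ)) + ∑ y, Fl (qf f α j y) ≤
      (1 - binEnt α) * ((n:ℝ) * (mf f j : ℝ) - 2 * (mf f j : ℝ) + 2) := by
  have hα1 : α ≤ 1 := by linarith
  set w : (Fin n → Bool) → ℕ := fun x => if f x = j then 1 else 0 with hw
  have hqc : ∀ y, qc α w y = qf f α j y := by
    intro y
    unfold qc qf
    rw [Finset.sum_filter]
    refine Finset.sum_congr rfl fun x _ => ?_
    by_cases h : f x = j <;> simp [hw, h]
  have hW : (∑ x, (w x : ℝ)) = (mf f j : ℝ) := by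
    unfold mf
    rw [← Finset.sum_boole]
    refine Finset.sum_congr rfl fun x _ => ?_
    by_cases h : f x = j <;> simp [hw, h]
  have hN : nsupp w = mf f j := by
    unfold nsupp mf
    congr 1
    refine Finset.filter_congr fun x _ => ?_
    by_cases h : f x = j <;> simp [hw, h]
  have hcore := core hα0 hα2 n w
  rw [hW, hN] at hcore
  rw [show (∑ y, Fl (qf f α j y)) = ∑ y, Fl (qc α w y) from
    Finset.sum_congr rfl fun y _ => by rw [hqc y]]
  have hFl : Fl (mf f j : ℝ) = (mf f j : ℝ) * Real.logb 2 (mf f j : ℝ) := rfl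
  nlinarith [hcore]

lemma mutInfo_le {n : ℕ} (hn : 1 ≤ n) (f : (Fin n → Bool) → (Fin (n-1) → Bool)) {α : ℝ}
    (hα0 : 0 ≤ α) (hα2 : α ≤ 1/2) :
    mutInfo f α ≤ ((n : ℝ) - 1) * (1 - binEnt α) := by
  have hα1 : α ≤ 1 := by linarith
  rw [mutInfo_eq f α hα0 hα1]
  have h2n : (0:ℝ) < 2^n := by positivity
  have hsum : ∑ j, ((mf f j : ℝ) * ((n:ℝ) - Real.logb 2 (mf f j : ℝ)) + ∑ y, Fl (qf f α j y))
      ≤ ∑ j, (1 - binEnt α) * ((n:ℝ) * (mf f j : ℝ) - 2 * (mf f j : ℝ) + 2) :=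
    Finset.sum_le_sum fun j _ => perj_bound f hα0 hα2 j
  have hmf : ∑ j, (mf f j : ℝ) = (2:ℝ)^n := by
    have := sum_mf f
    have h2 : ((∑ j, mf f j : ℕ) : ℝ) = ((2^n : ℕ) : ℝ) := by rw [this]
    push_cast at h2
    exact h2
  have hcard : (Finset.univ : Finset (Fin (n-1) → Bool)).card = 2^(n-1) := by
    rw [Finset.card_univ]
    simp [Fintype.card_fun]
  have hexp : ∑ j, (1 - binEnt α) * ((n:ℝ) * (mf f j : ℝ) - 2 * (mf f j : ℝ) + 2)
      = (1 - binEnt α) * ((n:ℝ) * (2:ℝ)^n - 2 * (2:ℝ)^n + 2 * (2:ℝ)^(n-1)) := by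
    rw [← Finset.mul_sum]
    congr 1
    rw [Finset.sum_add_distrib, Finset.sum_sub_distrib, ← Finset.mul_sum, ← Finset.mul_sum,
      hmf, Finset.sum_const, hcard]
    push_cast
    ring
  have hpow : (2:ℝ)^n = 2 * (2:ℝ)^(n-1) := by
    conv_lhs => rw [show n = (n-1) + 1 from (Nat.succ_pred_eq_of_pos hn).symm]
    rw [pow_succ]
    ring
  calc ((2:ℝ)^n)⁻¹ * ∑ j, ((mf f j : ℝ) * ((n:ℝ) - Real.logb 2 (mf f j : ℝ)) + ∑ y, Fl (qf f α j y))
      ≤ ((2:ℝ)^n)⁻¹ * ((1 - binEnt α) * ((n:ℝ) * (2:ℝ)^n - 2 * (2:ℝ)^n + 2 * (2:ℝ)^(n-1))) := by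
        apply mul_le_mul_of_nonneg_left _ (by positivity)
        rw [← hexp]
        exact hsum
    _ = ((n : ℝ) - 1) * (1 - binEnt α) := by
        rw [hpow]
        have hP : (0:ℝ) < (2:ℝ)^(n-1) := by positivity
        field_simp
        ring

lemma ent_bscK {α : ℝ} (hα0 : 0 ≤ α) (hα1 : α ≤ 1) :
    ∀ (m : ℕ) (x : Fin m → Bool), ∑ y, Fl (bscK α x y) = -(m:ℝ) * binEnt α := by
  intro m
  induction m with
  | zero =>
      intro x
      have h1 : ∀ y : Fin 0 → Bool, Fl (bscK α x y) = 0 := fun y => by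
        have : bscK α x y = 1 := by unfold bscK; simp
        rw [this]
        simp [Fl]
      rw [Finset.sum_congr rfl fun y _ => h1 y]
      simp
  | succ m ih =>
      intro x
      cases x using Fin.consCases with
      | cons a x' =>
        rw [sum_cons (g := fun y => Fl (bscK α (Fin.cons a x') y))]
        have hKnn : ∀ y', 0 ≤ bscK α x' y' := fun y' => bscK_nonneg hα0 hα1 x' y'
        have hterm : ∀ y' : Fin m → Bool,
            Fl (bscK α (Fin.cons a x') (Fin.cons false y')) +
            Fl (bscK α (Fin.cons a x') (Fin.cons true y'))
            = Fl (bscK α x' y') - bscK α x' y' * binEnt α := by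
          intro y'
          rw [bscK_cons, bscK_cons]
          have e1 : Fl ((1-α) * bscK α x' y') =
              bscK α x' y' * Fl (1-α) + (1-α) * Fl (bscK α x' y') :=
            Fl_mul (by linarith) (hKnn y')
          have e2 : Fl (α * bscK α x' y') =
              bscK α x' y' * Fl α + α * Fl (bscK α x' y') :=
            Fl_mul hα0 (hKnn y')
          have hbe : binEnt α = -(Fl α) - Fl (1 - α) := binEnt_fl α
          cases a <;> simp only [if_true, if_false] <;> rw [hbe] <;>
            simp only [Bool.false_eq_true, Bool.true_eq_false, if_true, if_false] <;>
            rw [e1, e2] <;> ring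
        rw [Finset.sum_congr rfl fun y' _ => hterm y']
        rw [Finset.sum_sub_distrib, ih x', ← Finset.sum_mul, sum_bscK_right]
        push_cast
        ring

section Proj

variable {N : ℕ} (α : ℝ)

noncomputable def fproj : (Fin (N+1) → Bool) → (Fin (N+1-1) → Bool) :=
  fun x j => x (Fin.castLE (Nat.sub_le (N+1) 1) j)

lemma fproj_snoc (x' : Fin N → Bool) (b : Bool) : fproj (Fin.snoc x' b) = x' := by
  funext i
  show (Fin.snoc x' b : Fin (N+1) → Bool) (Fin.castLE (Nat.sub_le (N+1) 1) i) = x' i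
  have : Fin.castLE (Nat.sub_le (N+1) 1) i = Fin.castSucc i := by
    apply Fin.ext
    rfl
  rw [this, Fin.snoc_castSucc]

lemma qf_proj {hα0 : 0 ≤ α} (j : Fin (N+1-1) → Bool) (y' : Fin N → Bool) (c : Bool) :
    qf fproj α j (Fin.snoc y' c) = bscK α j y' := by
  unfold qf
  rw [Finset.sum_filter]
  rw [sum_snoc (g := fun x => if fproj x = j then bscK α x (Fin.snoc y' c) else 0)]
  have hterm : ∀ x' : Fin N → Bool,
      ((if fproj (Fin.snoc x' false) = j then bscK α (Fin.snoc x' false) (Fin.snoc y' c) else 0)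
      + (if fproj (Fin.snoc x' true) = j then bscK α (Fin.snoc x' true) (Fin.snoc y' c) else 0))
      = if x' = j then bscK α x' y' else 0 := by
    intro x'
    rw [fproj_snoc, fproj_snoc, bscK_snoc, bscK_snoc]
    by_cases h : x' = j
    · simp only [h, if_true]
      cases c <;> simp <;> ring
    · simp [h]
  rw [Finset.sum_congr rfl fun x' _ => hterm x']
  calc (∑ x' : Fin N → Bool, if x' = j then bscK α x' y' else 0)
      = (if j = j then bscK α j y' else 0) :=
        Finset.sum_eq_single_of_mem _ (Finset.mem_univ _) (fun x' _ hxj => by simp [hxj])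
    _ = bscK α j y' := by simp

lemma mf_proj (j : Fin (N+1-1) → Bool) : mf (fproj (N := N)) j = 2 := by
  unfold mf
  rw [Finset.card_filter]
  rw [sum_snoc (g := fun x => if fproj x = j then 1 else 0)]
  have hterm : ∀ x' : Fin N → Bool,
      ((if fproj (Fin.snoc x' false) = j then 1 else 0)
      + (if fproj (Fin.snoc x' true) = j then (1:ℕ) else 0))
      = if x' = j then 2 else 0 := by
    intro x'
    rw [fproj_snoc, fproj_snoc]
    by_cases h : x' = j <;> simp [h]
  rw [Finset.sum_congr rfl fun x' _ => hterm x']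
  calc (∑ x' : Fin N → Bool, if x' = j then 2 else 0)
      = (if j = j then 2 else 0) :=
        Finset.sum_eq_single_of_mem _ (Finset.mem_univ _) (fun x' _ hxj => by simp [hxj])
    _ = 2 := by simp

lemma mutInfo_proj {hα0 : 0 ≤ α} (hα1 : α ≤ 1) :
    mutInfo (fproj (N := N)) α = (N : ℝ) * (1 - binEnt α) := by
  rw [mutInfo_eq _ α hα0 hα1]
  have hterm : ∀ j : Fin (N+1-1) → Bool,
      ((mf (fproj (N := N)) j : ℝ) * (((N+1 : ℕ):ℝ) - Real.logb 2 (mf (fproj (N := N)) j : ℝ))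
        + ∑ y, Fl (qf fproj α j y)) = 2 * (N:ℝ) * (1 - binEnt α) := by
    intro j
    have hq : ∑ y, Fl (qf fproj α j y) = 2 * (-(N:ℝ) * binEnt α) := by
      rw [sum_snoc (g := fun y => Fl (qf fproj α j y))]
      rw [Finset.sum_congr rfl fun y' _ => by
        rw [qf_proj α (hα0 := hα0) j y' false, qf_proj α (hα0 := hα0) j y' true]]
      have h2t : ∀ y' : Fin N → Bool,
          Fl (bscK α j y') + Fl (bscK α j y') = 2 * Fl (bscK α j y') := fun _ => by ring
      rw [Finset.sum_congr rfl fun y' _ => h2t y', ← Finset.mul_sum,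
        ent_bscK hα0 hα1 N j]
    rw [mf_proj, hq]
    have h22 : ((2:ℕ):ℝ) = (2:ℝ) := by norm_num
    rw [h22, Real.logb_self_eq_one (by norm_num)]
    push_cast
    ring
  rw [Finset.sum_congr rfl fun j _ => hterm j]
  rw [Finset.sum_const, Finset.card_univ]
  have hcard : Fintype.card (Fin (N+1-1) → Bool) = 2^N := by
    simp [Fintype.card_fun]
  rw [hcard]
  have h2n : ((2:ℝ)^(N+1))⁻¹ * ((2^N : ℕ) • (2 * (N:ℝ) * (1 - binEnt α))) = (N:ℝ) * (1 - binEnt α) := by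
    rw [nsmul_eq_mul]
    push_cast
    rw [pow_succ]
    have : (0:ℝ) < 2^N := by positivity
    field_simp
  rw [h2n]

end Proj

/-- Main theorem: any `(n-1)`-bit quantizer `f` of `X^n` satisfies
`I(f(X^n); Y^n) ≤ (n−1)(1−h(α))`, with equality for the projection onto the
first `n−1` coordinates. -/
theorem main_quantization_bound (n : ℕ) (hn : 1 ≤ n) (α : ℝ)
    (hα : α ∈ Set.Icc (0:ℝ) (1/2)) :
    (∀ f : (Fin n → Bool) → (Fin (n-1) → Bool),
      mutInfo f α ≤ ((n : ℝ) - 1) * (1 - binEnt α)) ∧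
    mutInfo (fun x (j : Fin (n-1)) => x (Fin.castLE (Nat.sub_le n 1) j)) α =
      ((n : ℝ) - 1) * (1 - binEnt α) := by
  obtain ⟨hα0, hα2⟩ := hα
  have hα1 : α ≤ 1 := by linarith
  constructor
  · intro f
    exact mutInfo_le hn f hα0 hα2
  · obtain ⟨N, rfl⟩ := Nat.exists_eq_succ_of_ne_zero (Nat.one_le_iff_ne_zero.mp hn)
    have hfp : (fun (x : Fin (N+1) → Bool) (j : Fin ((N+1)-1)) =>
        x (Fin.castLE (Nat.sub_le (N+1) 1) j)) = fproj (N := N) := rfl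
    rw [hfp, mutInfo_proj α (hα0 := hα0) hα1]
    push_cast
    ring
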